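/- Let X₁, X₂, … be i.i.d. copies of an integrable, centered real random variable X. For any t > 0, there exists b > 0 such that for all sequences of constants c₁, c₂, … with |cᵢ| ≤ b for all i and Σᵢ |cᵢ| ≤ 1, one has E|Σᵢ cᵢ Xᵢ| ≤ t. -/

import Mathlib

open MeasureTheory ProbabilityTheory Filter Topology
open scoped ENNReal NNReal

set_option maxHeartbeats 1000000 in
/-- If `X₁, X₂, …` are i.i.d. copies of an integrable centered random variable, then for any
`t > 0` there is `b > 0` such that for all constants `cᵢ` with `|cᵢ| ≤ b` and `Σᵢ |cᵢ| ≤ 1`,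
one has `E|Σᵢ cᵢ Xᵢ| ≤ t`. -/
theorem stmt3 {Ω : Type*} [MeasurableSpace Ω] (P : Measure Ω) [IsProbabilityMeasure P]
    (f : ℕ → Ω → ℝ) (hmeas : ∀ i, Measurable (f i))
    (hindep : iIndepFun f P)
    (hid : ∀ i, P.map (f i) = P.map (f 0))
    (hint : Integrable (f 0) P) (hcent : ∫ ω, f 0 ω ∂P = 0)
    (t : ℝ) (ht : 0 < t) :
    ∃ b : ℝ, 0 < b ∧ ∀ c : ℕ → ℝ, (∀ i, |c i| ≤ b) → Summable (fun i => |c i|) →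
      (∑' i, |c i|) ≤ 1 → ∫ ω, |∑' i, c i * f i ω| ∂P ≤ t := by
  classical
  have hφmeas : ∀ M : ℝ, Measurable (fun x : ℝ => if |x| ≤ M then x else 0) := fun M =>
    Measurable.ite (measurableSet_le measurable_abs measurable_const) measurable_id
      measurable_const
  -- Step 1 : choose the truncation level
  have htail : Tendsto
      (fun n : ℕ => ∫ ω, |f 0 ω - (if |f 0 ω| ≤ (n : ℝ) then f 0 ω else 0)| ∂P) atTop (𝓝 0) := by
    have H : Tendsto
        (fun n : ℕ => ∫ ω, |f 0 ω - (if |f 0 ω| ≤ (n : ℝ) then f 0 ω else 0)| ∂P) atTop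
        (𝓝 (∫ _ω, (0 : ℝ) ∂P)) := by
      apply tendsto_integral_of_dominated_convergence (fun ω => |f 0 ω|)
      · intro n
        exact ((hmeas 0).sub ((hφmeas (n : ℝ)).comp (hmeas 0))).abs.aestronglyMeasurable
      · exact hint.abs
      · intro n
        filter_upwards with ω
        by_cases h : |f 0 ω| ≤ (n : ℝ) <;> simp [h, abs_nonneg, abs_abs]
      · filter_upwards with ω
        have hev : ∀ᶠ n : ℕ in atTop,
            |f 0 ω - (if |f 0 ω| ≤ (n : ℝ) then f 0 ω else 0)| = 0 := by
          filter_upwards [eventually_ge_atTop ⌈|f 0 ω|⌉₊] with n hn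
          rw [if_pos, sub_self, abs_zero]
          exact le_trans (Nat.le_ceil _) (by exact_mod_cast hn)
        exact Tendsto.congr' (hev.mono fun n h => h.symm) tendsto_const_nhds
    simpa using H
  obtain ⟨n, hnt, hn1⟩ :=
    ((htail.eventually_lt_const (show (0 : ℝ) < t / 8 by linarith)).and
      (eventually_ge_atTop 1)).exists
  set M : ℝ := (n : ℝ) with hM
  have hM1 : (1 : ℝ) ≤ M := by rw [hM]; exact_mod_cast hn1
  set φ : ℝ → ℝ := fun x => if |x| ≤ M then x else 0 with hφ
  set ε : ℝ := ∫ ω, |f 0 ω - φ (f 0 ω)| ∂P with hε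
  have hεlt : ε < t / 8 := by simpa [hε, hφ] using hnt
  have hε0 : 0 ≤ ε := by
    rw [hε]; exact integral_nonneg fun ω => abs_nonneg _
  set K : ℝ := M + t with hK
  have hK0 : 0 < K := by rw [hK]; linarith
  refine ⟨(t / (2 * K)) ^ 2, by positivity, ?_⟩
  intro c hc hsum hsum1
  set b : ℝ := (t / (2 * K)) ^ 2 with hb
  have hb0 : 0 < b := by positivity
  -- identical distribution consequences
  have hid' : ∀ (g : ℝ → ℝ), Measurable g → ∀ i,
      ∫ ω, g (f i ω) ∂P = ∫ ω, g (f 0 ω) ∂P := by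
    intro g hg i
    rw [← integral_map (hmeas i).aemeasurable hg.aestronglyMeasurable, hid i,
      integral_map (hmeas 0).aemeasurable hg.aestronglyMeasurable]
  have hfint : ∀ i, Integrable (f i) P := by
    intro i
    have h0 : Integrable id (P.map (f 0)) :=
      (integrable_map_measure aestronglyMeasurable_id (hmeas 0).aemeasurable).mpr hint
    have := (integrable_map_measure aestronglyMeasurable_id (hmeas i).aemeasurable).mp
      (by rw [hid i]; exact h0)
    simpa [Function.comp] using this
  have hφb : ∀ x, |φ x| ≤ M := by
    intro x
    by_cases h : |x| ≤ M <;> simp [hφ, h]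
    linarith
  have hφint : ∀ i, Integrable (fun ω => φ (f i ω)) P := by
    intro i
    refine memLp_one_iff_integrable.mp (MemLp.of_bound
      (((hφmeas M).comp (hmeas i)).aestronglyMeasurable) M ?_)
    filter_upwards with ω
    simpa [Real.norm_eq_abs] using hφb (f i ω)
  set m : ℝ := ∫ ω, φ (f 0 ω) ∂P with hm
  have hmabs : |m| ≤ ε := by
    have hsplit : ∫ ω, (f 0 ω - φ (f 0 ω)) ∂P = -m := by
      rw [integral_sub hint (hφint 0), hcent]; ring
    have h1 : |∫ ω, (f 0 ω - φ (f 0 ω)) ∂P| ≤ ∫ ω, |f 0 ω - φ (f 0 ω)| ∂P := by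
      simpa [Real.norm_eq_abs] using
        norm_integral_le_integral_norm (μ := P) (fun ω => f 0 ω - φ (f 0 ω))
    rw [hsplit, abs_neg] at h1
    exact h1.trans_eq hε.symm
  -- the bounded and tail parts
  set W : ℕ → Ω → ℝ := fun i ω => c i * (φ (f i ω) - m) with hW
  set Z : ℕ → Ω → ℝ := fun i ω => c i * ((f i ω - φ (f i ω)) + m) with hZ
  have hWZ : ∀ i ω, W i ω + Z i ω = c i * f i ω := by
    intro i ω; simp only [hW, hZ]; ring
  have hWmeas : ∀ i, Measurable (W i) := fun i =>
    ((((hφmeas M).comp (hmeas i)).sub measurable_const).const_mul (c i))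
  have hZmeas : ∀ i, Measurable (Z i) := fun i =>
    ((((hmeas i).sub ((hφmeas M).comp (hmeas i))).add measurable_const).const_mul (c i))
  have hφmb : ∀ x, |φ x - m| ≤ K := by
    intro x
    have h1 : |φ x - m| ≤ |φ x| + |m| := abs_sub _ _
    have := hφb x
    rw [hK]; linarith
  have hWb : ∀ i ω, |W i ω| ≤ K * |c i| := by
    intro i ω
    calc |W i ω| = |c i| * |φ (f i ω) - m| := by rw [hW]; simp [abs_mul]
      _ ≤ |c i| * K := mul_le_mul_of_nonneg_left (hφmb _) (abs_nonneg _)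
      _ = K * |c i| := mul_comm _ _
  have hKc : Summable (fun i => K * |c i|) := hsum.mul_left K
  have hWsummable : ∀ ω, Summable (fun i => W i ω) := fun ω =>
    Summable.of_norm_bounded hKc (fun i => by
      simpa [Real.norm_eq_abs] using hWb i ω)
  set SW : Ω → ℝ := fun ω => ∑' i, W i ω with hSW
  have hSWtend : ∀ ω, Tendsto (fun N => ∑ i ∈ Finset.range N, W i ω) atTop (𝓝 (SW ω)) :=
    fun ω => (hWsummable ω).hasSum.tendsto_sum_nat
  have hSWmeas : Measurable SW :=
    measurable_of_tendsto_metrizable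
      (fun N => Finset.measurable_sum _ (fun i _ => hWmeas i))
      (tendsto_pi_nhds.mpr hSWtend)
  have hSWb : ∀ ω, |SW ω| ≤ K := by
    intro ω
    have h1 : ‖SW ω‖ ≤ K * ∑' i, |c i| :=
      tsum_of_norm_bounded (hsum.hasSum.mul_left K) (fun i => by
        simpa [Real.norm_eq_abs] using hWb i ω)
    rw [Real.norm_eq_abs] at h1
    calc |SW ω| ≤ K * ∑' i, |c i| := h1
      _ ≤ K * 1 := mul_le_mul_of_nonneg_left hsum1 hK0.le
      _ = K := mul_one K
  have hWint : ∀ i, Integrable (W i) P := by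
    intro i
    refine memLp_one_iff_integrable.mp (MemLp.of_bound (hWmeas i).aestronglyMeasurable
      (K * |c i|) ?_)
    filter_upwards with ω
    simpa [Real.norm_eq_abs] using hWb i ω
  have hW2 : ∀ i, MemLp (W i) 2 P := fun i =>
    MemLp.of_bound (hWmeas i).aestronglyMeasurable (K * |c i|)
      (by filter_upwards with ω; simpa [Real.norm_eq_abs] using hWb i ω)
  have hmφ : ∀ i, ∫ ω, φ (f i ω) ∂P = m := fun i => hid' φ (hφmeas M) i
  have hWmean : ∀ i, ∫ ω, W i ω ∂P = 0 := by
    intro i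
    have h1 : ∫ ω, W i ω ∂P = c i * ((∫ ω, φ (f i ω) ∂P) - m) := by
      rw [hW]
      simp only
      rw [integral_const_mul, integral_sub (hφint i) (integrable_const m), integral_const]
      simp
    rw [h1, hmφ i, sub_self, mul_zero]
  have hWindep : iIndepFun W P := by
    have := hindep.comp (fun i x => c i * (φ x - m))
      (fun i => (((hφmeas M).sub measurable_const).const_mul (c i)))
    exact this
  have hWsq : ∀ i, ∫ ω, W i ω ^ 2 ∂P ≤ K ^ 2 * b * |c i| := by
    intro i
    have hb1 : ∀ ω, W i ω ^ 2 ≤ K ^ 2 * b * |c i| := by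
      intro ω
      have h1 := hWb i ω
      have h2 : W i ω ^ 2 ≤ (K * |c i|) ^ 2 := by
        nlinarith [abs_nonneg (W i ω), sq_abs (W i ω)]
      have h3 : (K * |c i|) ^ 2 = K ^ 2 * (|c i| * |c i|) := by ring
      have h4 : |c i| * |c i| ≤ b * |c i| :=
        mul_le_mul_of_nonneg_right (hc i) (abs_nonneg _)
      nlinarith [sq_nonneg K]
    calc ∫ ω, W i ω ^ 2 ∂P ≤ ∫ _ω, K ^ 2 * b * |c i| ∂P :=
          integral_mono (hW2 i).integrable_sq (integrable_const _) hb1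
      _ = K ^ 2 * b * |c i| := by simp
  have hKb : K ^ 2 * b = t ^ 2 / 4 := by
    rw [hb]; field_simp; ring
  have hSN : ∀ N, ∫ ω, (∑ i ∈ Finset.range N, W i ω) ^ 2 ∂P ≤ t ^ 2 / 4 := by
    intro N
    have hvar : variance (∑ i ∈ Finset.range N, W i) P
        = ∑ i ∈ Finset.range N, variance (W i) P :=
      IndepFun.variance_sum (fun i _ => hW2 i)
        (fun i _ j _ hij => hWindep.indepFun hij)
    have hmean : ∫ ω, (∑ i ∈ Finset.range N, W i) ω ∂P = 0 := by
      simp only [Finset.sum_apply]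
      rw [integral_finset_sum _ (fun i _ => hWint i)]
      simp [hWmean]
    have hdef := variance_eq_sub (memLp_finset_sum' (Finset.range N) (fun i _ => hW2 i))
    rw [hmean] at hdef
    have hvari : ∀ i, variance (W i) P = ∫ ω, W i ω ^ 2 ∂P := by
      intro i
      rw [variance_eq_sub (hW2 i), hWmean i]
      simp
    have heq : ∫ ω, (∑ i ∈ Finset.range N, W i ω) ^ 2 ∂P
        = ∑ i ∈ Finset.range N, ∫ ω, W i ω ^ 2 ∂P := by
      have h2 : ∫ ω, (∑ i ∈ Finset.range N, W i ω) ^ 2 ∂P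
          = variance (∑ i ∈ Finset.range N, W i) P := by
        rw [hdef]
        simp only [Pi.pow_apply, Finset.sum_apply]
        ring
      rw [h2, hvar]
      exact Finset.sum_congr rfl fun i _ => hvari i
    rw [heq]
    calc ∑ i ∈ Finset.range N, ∫ ω, W i ω ^ 2 ∂P
        ≤ ∑ i ∈ Finset.range N, K ^ 2 * b * |c i| :=
          Finset.sum_le_sum fun i _ => hWsq i
      _ = K ^ 2 * b * ∑ i ∈ Finset.range N, |c i| := by rw [Finset.mul_sum]
      _ ≤ K ^ 2 * b * 1 := by
          refine mul_le_mul_of_nonneg_left ?_ (by positivity)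
          exact le_trans (Summable.sum_le_tsum _ (fun i _ => abs_nonneg _) hsum) hsum1
      _ = t ^ 2 / 4 := by rw [mul_one, hKb]
  have hSWint : Integrable SW P := by
    refine memLp_one_iff_integrable.mp (MemLp.of_bound hSWmeas.aestronglyMeasurable K ?_)
    filter_upwards with ω
    simpa [Real.norm_eq_abs] using hSWb ω
  have hSWsqint : Integrable (fun ω => SW ω ^ 2) P :=
    (MemLp.of_bound hSWmeas.aestronglyMeasurable K
      (by filter_upwards with ω; simpa [Real.norm_eq_abs] using hSWb ω)).integrable_sq
  have hSWsq : ∫ ω, SW ω ^ 2 ∂P ≤ t ^ 2 / 4 := by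
    have htd : Tendsto (fun N => ∫ ω, (∑ i ∈ Finset.range N, W i ω) ^ 2 ∂P) atTop
        (𝓝 (∫ ω, SW ω ^ 2 ∂P)) := by
      apply tendsto_integral_of_dominated_convergence (fun _ => K ^ 2)
      · intro N
        exact ((Finset.measurable_sum _ (fun i _ => hWmeas i)).pow
          measurable_const).aestronglyMeasurable
      · exact integrable_const _
      · intro N
        filter_upwards with ω
        have h1 : |∑ i ∈ Finset.range N, W i ω| ≤ K := by
          calc |∑ i ∈ Finset.range N, W i ω| ≤ ∑ i ∈ Finset.range N, |W i ω| :=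
              Finset.abs_sum_le_sum_abs _ _
            _ ≤ ∑ i ∈ Finset.range N, K * |c i| := Finset.sum_le_sum fun i _ => hWb i ω
            _ = K * ∑ i ∈ Finset.range N, |c i| := by rw [Finset.mul_sum]
            _ ≤ K * 1 := mul_le_mul_of_nonneg_left
                (le_trans (Summable.sum_le_tsum _ (fun i _ => abs_nonneg _) hsum) hsum1) hK0.le
            _ = K := mul_one K
        rw [Real.norm_eq_abs]
        calc |(∑ i ∈ Finset.range N, W i ω) ^ 2| = |∑ i ∈ Finset.range N, W i ω| ^ 2 := by
              rw [abs_pow]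
          _ ≤ K ^ 2 := by nlinarith [abs_nonneg (∑ i ∈ Finset.range N, W i ω)]
      · filter_upwards with ω
        exact (hSWtend ω).pow 2
    exact le_of_tendsto htd (Filter.Eventually.of_forall hSN)
  have hSWabs : ∫ ω, |SW ω| ∂P ≤ t / 2 := by
    have key : ∀ ω, |SW ω| ≤ SW ω ^ 2 / t + t / 4 := by
      intro ω
      have h4 : (|SW ω| - t / 4) * t ≤ SW ω ^ 2 := by
        nlinarith [sq_nonneg (|SW ω| - t / 2), sq_abs (SW ω)]
      have h5 : |SW ω| - t / 4 ≤ SW ω ^ 2 / t := (le_div_iff₀ ht).mpr h4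
      linarith
    calc ∫ ω, |SW ω| ∂P ≤ ∫ ω, (SW ω ^ 2 / t + t / 4) ∂P :=
          integral_mono hSWint.abs ((hSWsqint.div_const t).add (integrable_const _)) key
      _ = (∫ ω, SW ω ^ 2 ∂P) / t + t / 4 := by
          rw [integral_add (hSWsqint.div_const t) (integrable_const _), integral_div,
            integral_const]
          simp
      _ ≤ (t ^ 2 / 4) / t + t / 4 :=
          add_le_add_left ((div_le_div_iff_of_pos_right ht).mpr hSWsq) _
      _ = t / 2 := by field_simp; ring
  -- the tail part
  have hZint : ∀ i, Integrable (Z i) P := fun i =>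
    ((((hfint i).sub (hφint i)).add (integrable_const m)).const_mul (c i))
  have hZb : ∀ i, ∫ ω, |Z i ω| ∂P ≤ 2 * ε * |c i| := by
    intro i
    have h1 : ∀ ω, |Z i ω| ≤ |c i| * (|f i ω - φ (f i ω)| + ε) := by
      intro ω
      have h2 : |Z i ω| = |c i| * |(f i ω - φ (f i ω)) + m| := by rw [hZ]; simp [abs_mul]
      rw [h2]
      refine mul_le_mul_of_nonneg_left ?_ (abs_nonneg _)
      calc |(f i ω - φ (f i ω)) + m| ≤ |f i ω - φ (f i ω)| + |m| := abs_add_le _ _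
        _ ≤ |f i ω - φ (f i ω)| + ε := by linarith [hmabs]
    have hgi : ∫ ω, |f i ω - φ (f i ω)| ∂P = ε := by
      have := hid' (fun x => |x - φ x|) ((measurable_id.sub (hφmeas M)).abs) i
      rw [this, hε]
    calc ∫ ω, |Z i ω| ∂P ≤ ∫ ω, |c i| * (|f i ω - φ (f i ω)| + ε) ∂P :=
          integral_mono (hZint i).abs
            (((((hfint i).sub (hφint i)).abs.add (integrable_const ε))).const_mul _) h1
      _ = |c i| * ((∫ ω, |f i ω - φ (f i ω)| ∂P) + ε) := by
          have hgint : Integrable (fun ω => |f i ω - φ (f i ω)|) P :=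
            ((hfint i).sub (hφint i)).abs
          rw [integral_const_mul, integral_add hgint (integrable_const ε), integral_const]
          simp
      _ = |c i| * (ε + ε) := by rw [hgi]
      _ = 2 * ε * |c i| := by ring
  set T : Ω → ℝ≥0∞ := fun ω => ∑' i, (‖Z i ω‖₊ : ℝ≥0∞) with hT
  have hTmeas : Measurable T := Measurable.ennreal_tsum (fun i => (hZmeas i).nnnorm.coe_nnreal_ennreal)
  have hTlint : ∫⁻ ω, T ω ∂P ≤ ENNReal.ofReal (2 * ε) := by
    simp only [hT]
    rw [lintegral_tsum (fun i => ((hZmeas i).nnnorm.coe_nnreal_ennreal).aemeasurable)]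
    calc ∑' i, ∫⁻ ω, (‖Z i ω‖₊ : ℝ≥0∞) ∂P
        = ∑' i, ENNReal.ofReal (∫ ω, ‖Z i ω‖ ∂P) := by
          refine tsum_congr fun i => ?_
          exact (ofReal_integral_norm_eq_lintegral_enorm (hZint i)).symm
      _ ≤ ∑' i, ENNReal.ofReal (2 * ε * |c i|) := by
          refine ENNReal.tsum_le_tsum fun i => ENNReal.ofReal_le_ofReal ?_
          simpa [Real.norm_eq_abs] using hZb i
      _ = ENNReal.ofReal (∑' i, 2 * ε * |c i|) :=
          (ENNReal.ofReal_tsum_of_nonneg (fun i => by positivity) (hsum.mul_left _)).symm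
      _ ≤ ENNReal.ofReal (2 * ε) := by
          refine ENNReal.ofReal_le_ofReal ?_
          rw [tsum_mul_left]
          calc 2 * ε * ∑' i, |c i| ≤ 2 * ε * 1 :=
              mul_le_mul_of_nonneg_left hsum1 (by positivity)
            _ = 2 * ε := mul_one _
  have hTne : ∫⁻ ω, T ω ∂P ≠ ⊤ := (lt_of_le_of_lt hTlint ENNReal.ofReal_lt_top).ne
  have hTfin : ∀ᵐ ω ∂P, T ω < ⊤ := ae_lt_top hTmeas hTne
  have hTint : Integrable (fun ω => (T ω).toReal) P :=
    integrable_toReal_of_lintegral_ne_top hTmeas.aemeasurable hTne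
  have hTR : ∫ ω, (T ω).toReal ∂P ≤ 2 * ε := by
    rw [integral_toReal hTmeas.aemeasurable hTfin]
    exact ENNReal.toReal_le_of_le_ofReal (by positivity) hTlint
  -- putting everything together
  calc ∫ ω, |∑' i, c i * f i ω| ∂P ≤ ∫ ω, (|SW ω| + (T ω).toReal) ∂P := by
        refine integral_mono_of_nonneg (Filter.Eventually.of_forall fun ω => abs_nonneg _)
          (hSWint.abs.add hTint) ?_
        filter_upwards [hTfin] with ω hω
        have hnn : Summable (fun i => ‖Z i ω‖₊) := by
          rw [← ENNReal.tsum_coe_ne_top_iff_summable]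
          exact hω.ne
        have hZabs : Summable (fun i => |Z i ω|) := by
          have h1 := NNReal.summable_coe.mpr hnn
          simpa [coe_nnnorm, Real.norm_eq_abs] using h1
        have hZs : Summable (fun i => Z i ω) :=
          Summable.of_norm (by simpa [Real.norm_eq_abs] using hZabs)
        have hdecomp : (∑' i, c i * f i ω) = SW ω + ∑' i, Z i ω := by
          rw [hSW]
          simp only
          rw [← Summable.tsum_add (hWsummable ω) hZs]
          exact tsum_congr fun i => (hWZ i ω).symm
        have h1 : |∑' i, Z i ω| ≤ ∑' i, |Z i ω| := by
          simpa [Real.norm_eq_abs] using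
            norm_tsum_le_tsum_norm (f := fun i => Z i ω)
              (by simpa [Real.norm_eq_abs] using hZabs)
        have h2 : ∑' i, |Z i ω| = (T ω).toReal := by
          simp only [hT]
          rw [ENNReal.tsum_toReal_eq (fun i => ENNReal.coe_ne_top)]
          exact tsum_congr fun i => by simp [Real.norm_eq_abs]
        rw [hdecomp]
        calc |SW ω + ∑' i, Z i ω| ≤ |SW ω| + |∑' i, Z i ω| := abs_add_le _ _
          _ ≤ |SW ω| + (T ω).toReal := by rw [← h2]; linarith
    _ = (∫ ω, |SW ω| ∂P) + ∫ ω, (T ω).toReal ∂P := integral_add hSWint.abs hTint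
    _ ≤ t / 2 + 2 * ε := add_le_add hSWabs hTR
    _ ≤ t := by linarith
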